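/- Let t > M ≥ 2 be integers, let D > 0 and z ≥ 0 be real numbers, let ε, δ ∈ (0,1), and let η = max{1, (t−1)(t−2)/(M(M−1))}. Suppose M > √( 2(t−1)(t−2)/(δ·ε²·D + 2) + 1/4 ) + 1/2 and M > 2·z·(t−1)/(δ·ε²·D² + 2z). Then D·(η − 1) + z·(t−1−M)/M < δ·ε²·D². Consequently, by Chebyshev's inequality, every real random variable X with E[X] = D and Var[X] ≤ D·(η−1) + z·(t−1−M)/M satisfies Pr(|X − D| < ε·D) > 1 − δ. -/

import Mathlib

open MeasureTheory ProbabilityTheory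

/-- Quantitative core of the concentration theorem for TRIÈST-IMPR: for integers
`t > M ≥ 2`, reals `D > 0`, `z ≥ 0`, `ε, δ ∈ (0,1)` and
`η = max{1, (t-1)(t-2)/(M(M-1))}`, if `M` exceeds the two stated thresholds then
`D·(η-1) + z·(t-1-M)/M < δ·ε²·D²`; consequently, by Chebyshev's inequality, every
real random variable `X` with `E[X] = D` and `Var[X] ≤ D·(η-1) + z·(t-1-M)/M`
satisfies `Pr(|X - D| < ε·D) > 1 - δ`. -/
theorem stmt15 (M t : ℕ) (D z ε δ η : ℝ)
    (hM2 : 2 ≤ M) (hMt : M < t) (hD : 0 < D) (hz : 0 ≤ z)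
    (hε : ε ∈ Set.Ioo (0 : ℝ) 1) (hδ : δ ∈ Set.Ioo (0 : ℝ) 1)
    (hη : η = max 1 (((t : ℝ) - 1) * ((t : ℝ) - 2) / ((M : ℝ) * ((M : ℝ) - 1))))
    (hM1 : Real.sqrt (2 * ((t : ℝ) - 1) * ((t : ℝ) - 2) / (δ * ε ^ 2 * D + 2) + 1 / 4)
      + 1 / 2 < (M : ℝ))
    (hM2' : 2 * z * ((t : ℝ) - 1) / (δ * ε ^ 2 * D ^ 2 + 2 * z) < (M : ℝ)) :
    (D * (η - 1) + z * (((t : ℝ) - 1 - (M : ℝ)) / (M : ℝ)) < δ * ε ^ 2 * D ^ 2)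
    ∧ ∀ (Ω : Type) (_ : MeasurableSpace Ω) (μ : Measure Ω)
        (_ : IsProbabilityMeasure μ) (X : Ω → ℝ),
        MemLp X 2 μ →
        (∫ ω, X ω ∂μ) = D →
        variance X μ ≤ D * (η - 1) + z * (((t : ℝ) - 1 - (M : ℝ)) / (M : ℝ)) →
        1 - δ < (μ {ω | |X ω - D| < ε * D}).toReal := by
  obtain ⟨hε0, hε1⟩ := hε
  obtain ⟨hδ0, hδ1⟩ := hδ
  have hMR : (2 : ℝ) ≤ (M : ℝ) := by exact_mod_cast hM2
  have hM0 : (0 : ℝ) < (M : ℝ) := by linarith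
  have htR : (M : ℝ) + 1 ≤ (t : ℝ) := by exact_mod_cast hMt
  have hden : 0 < δ * ε ^ 2 * D + 2 := by positivity
  have hδεD : 0 < δ * ε ^ 2 * D := by positivity
  have hδεD2 : 0 < δ * ε ^ 2 * D ^ 2 := by positivity
  -- Part A
  have hs : 2 * ((t : ℝ) - 1) * ((t : ℝ) - 2) / (δ * ε ^ 2 * D + 2) + 1 / 4
      < ((M : ℝ) - 1 / 2) ^ 2 := by
    have harg : 0 ≤ 2 * ((t : ℝ) - 1) * ((t : ℝ) - 2) / (δ * ε ^ 2 * D + 2) + 1 / 4 := by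
      have : (0:ℝ) ≤ ((t : ℝ) - 1) := by linarith
      have : (0:ℝ) ≤ ((t : ℝ) - 2) := by linarith
      positivity
    have := Real.sq_sqrt harg
    nlinarith [Real.sqrt_nonneg (2 * ((t : ℝ) - 1) * ((t : ℝ) - 2) / (δ * ε ^ 2 * D + 2) + 1 / 4)]
  have hMM : 2 * ((t : ℝ) - 1) * ((t : ℝ) - 2) < (M : ℝ) * ((M : ℝ) - 1) * (δ * ε ^ 2 * D + 2) := by
    have h1 : 2 * ((t : ℝ) - 1) * ((t : ℝ) - 2) / (δ * ε ^ 2 * D + 2) < (M : ℝ) * ((M : ℝ) - 1) := by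
      nlinarith
    calc 2 * ((t : ℝ) - 1) * ((t : ℝ) - 2)
        = 2 * ((t : ℝ) - 1) * ((t : ℝ) - 2) / (δ * ε ^ 2 * D + 2) * (δ * ε ^ 2 * D + 2) := by
          field_simp
      _ < (M : ℝ) * ((M : ℝ) - 1) * (δ * ε ^ 2 * D + 2) := by
          exact mul_lt_mul_of_pos_right h1 hden
  have hA : D * (η - 1) < δ * ε ^ 2 * D ^ 2 / 2 := by
    have hMM0 : 0 < (M : ℝ) * ((M : ℝ) - 1) := by nlinarith
    have hq : ((t : ℝ) - 1) * ((t : ℝ) - 2) / ((M : ℝ) * ((M : ℝ) - 1)) - 1 < δ * ε ^ 2 * D / 2 := by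
      rw [div_sub_one hMM0.ne', div_lt_iff₀ hMM0]
      nlinarith
    have hη' : η - 1 < δ * ε ^ 2 * D / 2 := by
      rw [hη]
      rcases max_cases 1 (((t : ℝ) - 1) * ((t : ℝ) - 2) / ((M : ℝ) * ((M : ℝ) - 1))) with
        ⟨h, _⟩ | ⟨h, _⟩ <;> rw [h] <;> [linarith; linarith]
    calc D * (η - 1) < D * (δ * ε ^ 2 * D / 2) := by exact mul_lt_mul_of_pos_left hη' hD
      _ = δ * ε ^ 2 * D ^ 2 / 2 := by ring
  -- Part B
  have hB : z * (((t : ℝ) - 1 - (M : ℝ)) / (M : ℝ)) < δ * ε ^ 2 * D ^ 2 / 2 := by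
    have hden2 : 0 < δ * ε ^ 2 * D ^ 2 + 2 * z := by positivity
    have h1 : 2 * z * ((t : ℝ) - 1) < (M : ℝ) * (δ * ε ^ 2 * D ^ 2 + 2 * z) := by
      calc 2 * z * ((t : ℝ) - 1)
          = 2 * z * ((t : ℝ) - 1) / (δ * ε ^ 2 * D ^ 2 + 2 * z) * (δ * ε ^ 2 * D ^ 2 + 2 * z) := by
            field_simp
        _ < (M : ℝ) * (δ * ε ^ 2 * D ^ 2 + 2 * z) := mul_lt_mul_of_pos_right hM2' hden2
    rw [mul_div_assoc', div_lt_iff₀ hM0]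
    linarith
  have hmain : D * (η - 1) + z * (((t : ℝ) - 1 - (M : ℝ)) / (M : ℝ)) < δ * ε ^ 2 * D ^ 2 := by
    linarith
  refine ⟨hmain, ?_⟩
  intro Ω mΩ μ hμ X hX hmean hvar
  have hc : 0 < ε * D := by positivity
  have hcheb := meas_ge_le_variance_div_sq (μ := μ) hX hc
  rw [hmean] at hcheb
  have hvc : variance X μ / (ε * D) ^ 2 < δ := by
    rw [div_lt_iff₀ (by positivity)]
    calc variance X μ ≤ D * (η - 1) + z * (((t : ℝ) - 1 - (M : ℝ)) / (M : ℝ)) := hvar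
      _ < δ * ε ^ 2 * D ^ 2 := hmain
      _ = δ * (ε * D) ^ 2 := by ring
  set A : Set Ω := {ω | |X ω - D| < ε * D} with hA'
  have hcompl : Aᶜ = {ω | ε * D ≤ |X ω - D|} := by
    ext ω; simp [hA', not_lt]
  have hAc : (μ Aᶜ).toReal < δ := by
    have h1 : μ Aᶜ ≤ ENNReal.ofReal (variance X μ / (ε * D) ^ 2) := by
      rw [hcompl]; exact hcheb
    have h2 : (μ Aᶜ).toReal ≤ variance X μ / (ε * D) ^ 2 := by
      have := ENNReal.toReal_mono ENNReal.ofReal_ne_top h1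
      rwa [ENNReal.toReal_ofReal (div_nonneg (variance_nonneg X μ) (by positivity))] at this
    linarith
  have hsum : (1 : ℝ) ≤ (μ A).toReal + (μ Aᶜ).toReal := by
    have h1 : (1 : ENNReal) ≤ μ A + μ Aᶜ := by
      have := measure_union_le (μ := μ) A Aᶜ
      rwa [Set.union_compl_self, measure_univ] at this
    have hAfin : μ A ≠ ⊤ := (measure_lt_top μ A).ne
    have hAcfin : μ Aᶜ ≠ ⊤ := (measure_lt_top μ Aᶜ).ne
    have := ENNReal.toReal_mono (by finiteness) h1
    rwa [ENNReal.toReal_one, ENNReal.toReal_add hAfin hAcfin] at this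
  linarith
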